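/- For a matrix M = [a b; c d] ∈ SL₂(ℤ/Nℤ), the condition that M·[1 0; 0 x]·M⁻¹ ∈ U_H for all x ∈ (ℤ/Nℤ)^× is equivalent to: for all x ∈ (ℤ/Nℤ)^×, cd(x-1) ≡ 0 mod N and ad(x-1) + 1 ∈ H. -/

import Mathlib

private lemma stmt5_aux (N : ℕ) (M : Matrix.SpecialLinearGroup (Fin 2) (ZMod N)) (x : (ZMod N)ˣ) :
    ((M : Matrix (Fin 2) (Fin 2) (ZMod N)) *
          Matrix.of ![![1, 0], ![0, (x : ZMod N)]] *
          ((M⁻¹ : Matrix.SpecialLinearGroup (Fin 2) (ZMod N)) : Matrix (Fin 2) (Fin 2) (ZMod N))) 1 0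
      = -((M : Matrix (Fin 2) (Fin 2) (ZMod N)) 1 0 * (M : Matrix (Fin 2) (Fin 2) (ZMod N)) 1 1 * ((x : ZMod N) - 1))
    ∧ ((M : Matrix (Fin 2) (Fin 2) (ZMod N)) *
          Matrix.of ![![1, 0], ![0, (x : ZMod N)]] *
          ((M⁻¹ : Matrix.SpecialLinearGroup (Fin 2) (ZMod N)) : Matrix (Fin 2) (Fin 2) (ZMod N))) 1 1
      = (M : Matrix (Fin 2) (Fin 2) (ZMod N)) 0 0 * (M : Matrix (Fin 2) (Fin 2) (ZMod N)) 1 1 * ((x : ZMod N) - 1) + 1 := by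
  have hdet : (M : Matrix (Fin 2) (Fin 2) (ZMod N)) 0 0 * (M : Matrix (Fin 2) (Fin 2) (ZMod N)) 1 1
      - (M : Matrix (Fin 2) (Fin 2) (ZMod N)) 0 1 * (M : Matrix (Fin 2) (Fin 2) (ZMod N)) 1 0 = 1 := by
    have := M.2; rwa [Matrix.det_fin_two] at this
  rw [Matrix.SpecialLinearGroup.coe_inv, Matrix.adjugate_fin_two]
  simp [Matrix.mul_apply, Fin.sum_univ_two]
  exact ⟨by ring, by linear_combination hdet⟩

/-- for `M = [a b; c d] ∈ SL₂(ℤ/Nℤ)`, the condition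
`M·[1 0; 0 x]·M⁻¹ ∈ U_H` for all units `x` is equivalent to:
for all `x ∈ (ℤ/Nℤ)ˣ`, `cd(x-1) = 0` and `ad(x-1) + 1 ∈ H`.
Here `U_H` consists of matrices `g` with `g` or `-g` upper triangular with
lower-right entry in `H` (the subgroup of upper triangular matrices mod `±1`). -/
theorem stmt5 (N : ℕ) (hN : 0 < N) (H : Subgroup (ZMod N)ˣ) (hH : -1 ∈ H)
    (M : Matrix.SpecialLinearGroup (Fin 2) (ZMod N)) :
    (∀ x : (ZMod N)ˣ,
      let g : Matrix (Fin 2) (Fin 2) (ZMod N) :=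
        (M : Matrix (Fin 2) (Fin 2) (ZMod N)) *
          Matrix.of ![![1, 0], ![0, (x : ZMod N)]] *
          ((M⁻¹ : Matrix.SpecialLinearGroup (Fin 2) (ZMod N)) : Matrix (Fin 2) (Fin 2) (ZMod N))
      (g 1 0 = 0 ∧ ∃ u ∈ H, ((u : (ZMod N)ˣ) : ZMod N) = g 1 1) ∨
      ((-g) 1 0 = 0 ∧ ∃ u ∈ H, ((u : (ZMod N)ˣ) : ZMod N) = (-g) 1 1))
    ↔ (∀ x : (ZMod N)ˣ,
      (M : Matrix (Fin 2) (Fin 2) (ZMod N)) 1 0 * (M : Matrix (Fin 2) (Fin 2) (ZMod N)) 1 1 *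
          ((x : ZMod N) - 1) = 0 ∧
      ∃ u ∈ H, ((u : (ZMod N)ˣ) : ZMod N) =
        (M : Matrix (Fin 2) (Fin 2) (ZMod N)) 0 0 * (M : Matrix (Fin 2) (Fin 2) (ZMod N)) 1 1 *
          ((x : ZMod N) - 1) + 1) := by
  constructor
  · intro h x
    obtain ⟨h10, h11⟩ := stmt5_aux N M x
    rcases h x with ⟨hg0, u, hu, hue⟩ | ⟨hg0, u, hu, hue⟩
    · refine ⟨by rw [h10] at hg0; exact neg_eq_zero.mp hg0, u, hu, ?_⟩
      · rw [hue, h11]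
    · simp only [Matrix.neg_apply] at hg0 hue
      refine ⟨?_, -u, by rw [show -u = -1 * u from (neg_one_mul u).symm]; exact H.mul_mem hH hu, ?_⟩
      · rw [h10] at hg0; simpa using hg0
      · push_cast
        rw [hue, h11]; ring
  · intro h x
    obtain ⟨h10, h11⟩ := stmt5_aux N M x
    obtain ⟨hc, u, hu, hue⟩ := h x
    exact Or.inl ⟨by rw [h10, hc, neg_zero], u, hu, by rw [hue, h11]⟩
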